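/- For every real p > 2 and positive reals A, B, the class of finite sequences (X₁,…,X_n) of independent zero-mean random variables with ∑ E X_i² = B and ∑ E|X_i|^p = A (with equality) is nonempty. -/

import Mathlib

open MeasureTheory

/-- The set of values `E |X₁ + ⋯ + Xₙ|^p` over all finite sequences of independent
zero-mean random variables (encoded by the product of their laws) with
`∑ E Xᵢ² = B` and `∑ E|Xᵢ|^p = A`. -/
noncomputable def rosSet (p A B : ℝ) : Set ℝ :=
  {E | ∃ (n : ℕ) (ν : Fin n → Measure ℝ),
    (∀ i, IsProbabilityMeasure (ν i)) ∧
    (∀ i, Integrable (fun x : ℝ => x) (ν i)) ∧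
    (∀ i, (∫ x, x ∂(ν i)) = 0) ∧
    (∀ i, Integrable (fun x : ℝ => x ^ 2) (ν i)) ∧
    (∀ i, Integrable (fun x : ℝ => |x| ^ p) (ν i)) ∧
    (∑ i, ∫ x, x ^ 2 ∂(ν i)) = B ∧
    (∑ i, ∫ x, |x| ^ p ∂(ν i)) = A ∧
    E = ∫ x, |∑ i, x i| ^ p ∂(Measure.pi ν)}

lemma integ_dirac_int (f : ℝ → ℝ) (x : ℝ) : Integrable f (Measure.dirac x) := by
  have h : f =ᵐ[Measure.dirac x] fun _ => f x := by
    simp [Filter.EventuallyEq, MeasureTheory.ae_dirac_eq]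
  exact (integrable_const (f x)).congr h.symm

noncomputable def threePoint (q a : ℝ) : Measure ℝ :=
  ENNReal.ofReal q • Measure.dirac a + ENNReal.ofReal q • Measure.dirac (-a)
    + ENNReal.ofReal (1 - 2*q) • Measure.dirac 0

lemma threePoint_integrable (f : ℝ → ℝ) (q a : ℝ) : Integrable f (threePoint q a) := by
  unfold threePoint
  exact (((integ_dirac_int f a).smul_measure ENNReal.ofReal_ne_top).add_measure
    ((integ_dirac_int f (-a)).smul_measure ENNReal.ofReal_ne_top)).add_measure
    ((integ_dirac_int f 0).smul_measure ENNReal.ofReal_ne_top)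

lemma threePoint_integral (f : ℝ → ℝ) (q a : ℝ) (hq : 0 ≤ q) (hq2 : 2*q ≤ 1) :
    ∫ x, f x ∂(threePoint q a) = q * f a + q * f (-a) + (1 - 2*q) * f 0 := by
  unfold threePoint
  rw [integral_add_measure (((integ_dirac_int f a).smul_measure ENNReal.ofReal_ne_top).add_measure
    ((integ_dirac_int f (-a)).smul_measure ENNReal.ofReal_ne_top))
    ((integ_dirac_int f 0).smul_measure ENNReal.ofReal_ne_top),
    integral_add_measure ((integ_dirac_int f a).smul_measure ENNReal.ofReal_ne_top)
    ((integ_dirac_int f (-a)).smul_measure ENNReal.ofReal_ne_top)]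
  simp [integral_smul_measure, ENNReal.toReal_ofReal hq,
    ENNReal.toReal_ofReal (by linarith : (0:ℝ) ≤ 1 - 2*q)]

lemma threePoint_prob (q a : ℝ) (hq : 0 ≤ q) (hq2 : 2*q ≤ 1) :
    IsProbabilityMeasure (threePoint q a) := by
  constructor
  unfold threePoint
  simp only [Measure.add_apply, Measure.smul_apply, smul_eq_mul,
    Measure.dirac_apply_of_mem (Set.mem_univ _), mul_one]
  rw [← ENNReal.ofReal_add hq hq, ← ENNReal.ofReal_add (by linarith) (by linarith)]
  have h1 : q + q + (1 - 2*q) = 1 := by ring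
  rw [h1, ENNReal.ofReal_one]

theorem stmt19 (p A B : ℝ) (hp : 2 < p) (hA : 0 < A) (hB : 0 < B) :
    (rosSet p A B).Nonempty := by
  set a : ℝ := (A/B) ^ ((p-2)⁻¹) with ha_def
  have hAB : 0 < A/B := div_pos hA hB
  have ha : 0 < a := Real.rpow_pos_of_pos hAB _
  have hp2 : p - 2 ≠ 0 := by linarith
  have hak : a ^ (p-2) = A/B := by
    rw [ha_def, ← Real.rpow_mul hAB.le, inv_mul_cancel₀ hp2, Real.rpow_one]
  set n : ℕ := ⌈B / a^2⌉₊ + 1 with hn_def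
  have hn0 : 0 < (n:ℝ) := by positivity
  have hnB : B ≤ (n:ℝ) * a^2 := by
    have h1 : B / a^2 ≤ (n:ℝ) := by
      calc B / a^2 ≤ (⌈B / a^2⌉₊ : ℝ) := Nat.le_ceil _
        _ ≤ (n:ℝ) := by rw [hn_def]; push_cast; linarith
    calc B = (B / a^2) * a^2 := by field_simp
      _ ≤ (n:ℝ) * a^2 := by nlinarith [sq_nonneg a, ha]
  set q : ℝ := B / (2 * n * a^2) with hq_def
  have hq0 : 0 < q := by positivity
  have hX : (0:ℝ) < (n:ℝ)*a^2 := by positivity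
  have hq2 : 2*q ≤ 1 := by
    calc 2*q = B/((n:ℝ)*a^2) := by rw [hq_def]; field_simp
      _ ≤ 1 := by rw [div_le_one hX]; exact hnB
  refine ⟨_, n, fun _ => threePoint q a, fun _ => threePoint_prob q a hq0.le hq2,
    fun _ => threePoint_integrable _ q a, ?_, fun _ => threePoint_integrable _ q a,
    fun _ => threePoint_integrable _ q a, ?_, ?_, rfl⟩
  · intro i
    rw [threePoint_integral _ q a hq0.le hq2]; ring
  · rw [Finset.sum_const, Finset.card_univ, Fintype.card_fin, nsmul_eq_mul,
      threePoint_integral _ q a hq0.le hq2]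
    have : q * a^2 + q * (-a)^2 + (1-2*q) * 0^2 = 2 * q * a^2 := by ring
    rw [this, hq_def]
    field_simp
  · rw [Finset.sum_const, Finset.card_univ, Fintype.card_fin, nsmul_eq_mul,
      threePoint_integral _ q a hq0.le hq2]
    have h0 : |(0:ℝ)| ^ p = 0 := by
      rw [abs_zero, Real.zero_rpow (by linarith)]
    rw [abs_of_pos ha, abs_neg, abs_of_pos ha, h0, mul_zero, add_zero]
    have hap : a ^ p = a ^ (p-2) * a^2 := by
      rw [← Real.rpow_two, ← Real.rpow_add ha]; ring_nf
    rw [hap, hak, hq_def]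
    field_simp
    ring
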